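/- For any convex regularizer R on a convex set K in a Banach space with induced Bregman divergence D_R, and any convex differentiable function f, the implicit mirror descent update w* = argmin_{w∈K} { f(w) + D_R(w, c) } satisfies ⟨w* - d, ∇f(w*)⟩ ≤ D_R(d, c) - D_R(d, w*) - D_R(w*, c) for every d ∈ K. -/

import Mathlib

open InnerProductSpace

/-- three-point property of the implicit mirror descent update
`w* = argmin_{w∈K} { f(w) + D_R(w, c) }` for convex differentiable `f` and a
convex differentiable regularizer `R` with Bregman divergence `D_R`. -/
theorem implicit_mirror_descent_three_point
    {E : Type*} [NormedAddCommGroup E] [InnerProductSpace ℝ E] [CompleteSpace E]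
    (K : Set E) (hK : Convex ℝ K)
    (R f : E → ℝ) (gR gf : E → E)
    (hR_conv : ConvexOn ℝ K R) (hf_conv : ConvexOn ℝ K f)
    (hgR : ∀ x, HasGradientAt R (gR x) x)   -- gR is the gradient of R
    (hgf : ∀ x, HasGradientAt f (gf x) x)   -- gf is the gradient of f
    (D : E → E → ℝ)
    (hD : ∀ a b, D a b = R a - R b - (inner ℝ (gR b) (a - b) : ℝ))  -- Bregman divergence
    (c wstar : E) (hc : c ∈ K) (hw : wstar ∈ K)
    -- w* is the minimizer of f(·) + D_R(·, c) over K: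
    (hmin : ∀ w ∈ K, f wstar + D wstar c ≤ f w + D w c) :
    ∀ d ∈ K, (inner ℝ (wstar - d) (gf wstar) : ℝ) ≤ D d c - D d wstar - D wstar c := by
  intro d hd
  -- the objective
  set g : E → ℝ := fun w => f w + D w c with hg
  -- its Fréchet derivative at wstar
  have hGrad : HasFDerivAt g (toDual ℝ E (gf wstar) + (toDual ℝ E (gR wstar) - toDual ℝ E (gR c))) wstar := by
    have h1 : HasFDerivAt f (toDual ℝ E (gf wstar)) wstar := (hgf wstar).hasFDerivAt
    have h2 : HasFDerivAt R (toDual ℝ E (gR wstar)) wstar := (hgR wstar).hasFDerivAt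
    have h3 : HasFDerivAt (fun w : E => (inner ℝ (gR c) (w - c) : ℝ))
        (toDual ℝ E (gR c)) wstar := by
      have : HasFDerivAt (fun w : E => (inner ℝ (gR c) w : ℝ)) (toDual ℝ E (gR c)) wstar :=
        (toDual ℝ E (gR c)).hasFDerivAt
      simpa [inner_sub_right] using this.sub_const (inner ℝ (gR c) c : ℝ)
    have : HasFDerivAt (fun w => f w + (R w - R c - (inner ℝ (gR c) (w - c) : ℝ)))
        (toDual ℝ E (gf wstar) + (toDual ℝ E (gR wstar) - toDual ℝ E (gR c))) wstar :=
      h1.add ((h2.sub_const (R c)).sub h3)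
    have heq : (fun w => f w + (R w - R c - (inner ℝ (gR c) (w - c) : ℝ))) = g := by
      funext w; simp [hg, hD]
    rw [heq] at this
    exact this
  -- variational inequality
  have hminOn : IsMinOn g K wstar := fun x hx => hmin x hx
  have hmin' : IsLocalMinOn g K wstar := hminOn.localize
  have hcone : d - wstar ∈ posTangentConeAt K wstar :=
    sub_mem_posTangentConeAt_of_segment_subset (hK.segment_subset hw hd)
  have hvi : (0:ℝ) ≤ (toDual ℝ E (gf wstar) + (toDual ℝ E (gR wstar) - toDual ℝ E (gR c))) (d - wstar) :=
    hmin'.hasFDerivWithinAt_nonneg hGrad.hasFDerivWithinAt hcone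
  have hvi' : (0 : ℝ) ≤ inner ℝ (gf wstar) (d - wstar) + (inner ℝ (gR wstar) (d - wstar) - inner ℝ (gR c) (d - wstar) : ℝ) := by
    simpa using hvi
  rw [hD, hD, hD]
  have := hvi'
  simp only [inner_add_left, inner_sub_left, inner_sub_right, real_inner_comm] at this ⊢
  nlinarith [this]
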